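/- arXiv:2304.06453 — 2 statements merged into one kernel-verified Lean document; each statement's English description precedes it below -/
import Mathlib

section
/- Let G be a finite simple connected graph with a median-consistent vertex μ, and suppose G contains no induced subgraph isomorphic to Q_3^-. Then G contains an induced subgraph isomorphic to K_{2,3} if and only if there exist vertices x, y, z, z' with z ≠ z' and an ℓ ≥ 1 such that both (x,z,y,μ) and (x,z',y,μ) are distance-ℓ-static quartets. -/
open SimpleGraph

/-- `z` lies on some shortest path connecting `u` and `v` in the graph `G`,
i.e. `z ∈ I(u,v)`. -/
def OnShortestPath {V : Type*} (G : SimpleGraph V) (u v z : V) : Prop :=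
  ∃ p : G.Walk u v, p.length = G.dist u v ∧ z ∈ p.support

/-- `m` is a median point of the triple `u, v, w`, i.e. `m ∈ I(u,v) ∩ I(u,w) ∩ I(v,w)`. -/
def IsMedianPt {V : Type*} (G : SimpleGraph V) (u v w m : V) : Prop :=
  OnShortestPath G u v m ∧ OnShortestPath G u w m ∧ OnShortestPath G v w m

/-- `μ` is a median-consistent (medico) vertex of `G`:
`|I(μ,v,w)| = 1` for all vertices `v, w`. -/
def Medico {V : Type*} (G : SimpleGraph V) (μ : V) : Prop :=
  ∀ v w : V, ∃! m : V, IsMedianPt G μ v w m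

/-- The quartet `(x, z, y, w)` is distance-`ℓ`-static:
`d(x,w) = d(z,w) = ℓ = d(y,w) - 1`, `d(x,z) = 2`, and `y` is a common neighbor
of `x` and `z` (for `ℓ ≥ 1`). -/
def DistLStatic {V : Type*} (G : SimpleGraph V) (x z y w : V) (ℓ : ℕ) : Prop :=
  1 ≤ ℓ ∧ G.dist x w = ℓ ∧ G.dist z w = ℓ ∧ G.dist y w = ℓ + 1 ∧
    G.dist x z = 2 ∧ G.Adj x y ∧ G.Adj y z

/-- `G` contains an induced copy of the graph `H`. -/
def HasInducedCopy {W V : Type*} (H : SimpleGraph W) (G : SimpleGraph V) : Prop :=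
  ∃ f : W ↪ V, ∀ a b : W, H.Adj a b ↔ G.Adj (f a) (f b)

/-- The 3-dimensional hypercube `Q_3`: vertices `{0,1}^3`, edges between vertices
differing in exactly one coordinate. -/
def CubeGraph3 : SimpleGraph (Fin 3 → Bool) :=
  SimpleGraph.fromRel fun a b => (Finset.univ.filter fun i => a i ≠ b i).card = 1

/-- `Q_3^-`: the hypercube `Q_3` with one vertex (and its incident edges) deleted. -/
def Q3Minus : SimpleGraph {v : Fin 3 → Bool // v ≠ fun _ => true} :=
  CubeGraph3.induce {v : Fin 3 → Bool | v ≠ fun _ => true}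

section Helpers
variable {V : Type*} {G : SimpleGraph V} {μ : V}

lemma onShortestPath_iff (hconn : G.Connected) {u v z : V} :
    OnShortestPath G u v z ↔ G.dist u z + G.dist z v = G.dist u v := by
  constructor
  · classical
    rintro ⟨p, hp, hz⟩
    have h1 := SimpleGraph.dist_le (p.takeUntil z hz)
    have h2 := SimpleGraph.dist_le (p.dropUntil z hz)
    have hsum : (p.takeUntil z hz).length + (p.dropUntil z hz).length = p.length := by
      have h3 : ((p.takeUntil z hz).append (p.dropUntil z hz)).length = p.length := by
        rw [p.take_spec hz]
      rwa [SimpleGraph.Walk.length_append] at h3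
    have htri := hconn.dist_triangle (u := u) (v := z) (w := v)
    omega
  · intro h
    obtain ⟨p, hp⟩ := hconn.exists_walk_length_eq_dist u z
    obtain ⟨q, hq⟩ := hconn.exists_walk_length_eq_dist z v
    refine ⟨p.append q, ?_, ?_⟩
    · rw [SimpleGraph.Walk.length_append, hp, hq, h]
    · simp [SimpleGraph.Walk.mem_support_append_iff]

lemma dist_eq_two' (hconn : G.Connected) {u v w : V} (hne : u ≠ v) (hnadj : ¬ G.Adj u v)
    (h1 : G.Adj u w) (h2 : G.Adj w v) : G.dist u v = 2 := by
  have hle : G.dist u v ≤ 2 := by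
    have := SimpleGraph.dist_le (Walk.cons h1 (Walk.cons h2 Walk.nil))
    simpa using this
  have h0 : G.dist u v ≠ 0 := by simp [hconn.dist_eq_zero_iff, hne]
  have hone : G.dist u v ≠ 1 := by simp [SimpleGraph.dist_eq_one_iff_adj, hnadj]
  omega

lemma not_adj_of_dist_two {u v : V} (h : G.dist u v = 2) : ¬ G.Adj u v := by
  intro ha
  rw [← SimpleGraph.dist_eq_one_iff_adj] at ha
  omega

lemma ne_of_dist_two {u v : V} (h : G.dist u v = 2) : u ≠ v := by
  rintro rfl
  rw [SimpleGraph.dist_self] at h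
  omega

lemma level_adj_le (hconn : G.Connected) {u v : V} (h : G.Adj u v) (μ : V) :
    G.dist μ v ≤ G.dist μ u + 1 := by
  have := hconn.dist_triangle (u := μ) (v := u) (w := v)
  rwa [SimpleGraph.dist_eq_one_iff_adj.mpr h] at this

lemma level_adj_ne (hconn : G.Connected) (hμ : Medico G μ) {u v : V} (h : G.Adj u v) :
    G.dist μ u ≠ G.dist μ v := by
  intro heq
  obtain ⟨m, ⟨h1, h2, h3⟩, -⟩ := hμ u v
  rw [onShortestPath_iff hconn] at h1 h2 h3
  rw [SimpleGraph.dist_eq_one_iff_adj.mpr h] at h3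
  have hc : G.dist u m = 0 ∨ G.dist m v = 0 := by omega
  rcases hc with h0 | h0
  · have : u = m := hconn.dist_eq_zero_iff.mp h0
    subst this
    rw [SimpleGraph.dist_eq_one_iff_adj.mpr h] at h2
    omega
  · have : m = v := hconn.dist_eq_zero_iff.mp h0
    subst this
    rw [SimpleGraph.dist_eq_one_iff_adj.mpr h.symm] at h1
    omega

lemma level_step (hconn : G.Connected) (hμ : Medico G μ) {u v : V} (h : G.Adj u v) :
    G.dist μ v = G.dist μ u + 1 ∨ G.dist μ u = G.dist μ v + 1 := by
  have h1 := level_adj_le hconn h μ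
  have h2 := level_adj_le hconn h.symm μ
  have h3 := level_adj_ne hconn hμ h
  omega

lemma median_structure (hconn : G.Connected) (hμ : Medico G μ) {u v : V} {ℓ : ℕ}
    (hu : G.dist μ u = ℓ) (hv : G.dist μ v = ℓ) (huv : G.dist u v = 2) :
    ∃ m : V, G.Adj m u ∧ G.Adj m v ∧ G.dist μ m + 1 = ℓ ∧
      ∀ w : V, G.Adj w u → G.Adj w v → G.dist μ w + 1 = ℓ → w = m := by
  obtain ⟨m, ⟨h1, h2, h3⟩, huniq⟩ := hμ u v
  rw [onShortestPath_iff hconn] at h1 h2 h3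
  have hmu : G.dist u m ≠ 0 := by
    intro h0
    have he : u = m := hconn.dist_eq_zero_iff.mp h0
    subst he
    rw [hu, huv] at h2
    omega
  have hmv : G.dist m v ≠ 0 := by
    intro h0
    have he : m = v := hconn.dist_eq_zero_iff.mp h0
    subst he
    have hc : G.dist m u = 2 := by rwa [SimpleGraph.dist_comm]
    rw [hv, hc] at h1
    omega
  rw [huv] at h3
  have hdu : G.dist u m = 1 := by omega
  have hdv : G.dist m v = 1 := by omega
  have hadju : G.Adj m u := (SimpleGraph.dist_eq_one_iff_adj.mp hdu).symm
  have hadjv : G.Adj m v := SimpleGraph.dist_eq_one_iff_adj.mp hdv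
  have hmL : G.dist μ m + 1 = ℓ := by
    rw [hu] at h1
    rw [SimpleGraph.dist_comm] at hdu
    omega
  refine ⟨m, hadju, hadjv, hmL, ?_⟩
  intro w hwu hwv hwL
  refine huniq w ⟨?_, ?_, ?_⟩ <;> rw [onShortestPath_iff hconn]
  · rw [hu, SimpleGraph.dist_eq_one_iff_adj.mpr hwu]
    omega
  · rw [hv, SimpleGraph.dist_eq_one_iff_adj.mpr hwv]
    omega
  · rw [huv, SimpleGraph.dist_eq_one_iff_adj.mpr hwu.symm, SimpleGraph.dist_eq_one_iff_adj.mpr hwv]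

lemma no_parallel (hconn : G.Connected) (hμ : Medico G μ) {a b c d : V}
    (hac : G.Adj a c) (had : G.Adj a d) (hbc : G.Adj b c) (hbd : G.Adj b d)
    (nab : a ≠ b) (ncd : c ≠ d) (hnab : ¬G.Adj a b) (hncd : ¬G.Adj c d)
    (hlab : G.dist μ a = G.dist μ b) (hlcd : G.dist μ c = G.dist μ d) : False := by
  have dcd : G.dist c d = 2 := dist_eq_two' hconn ncd hncd hac.symm had
  have dab : G.dist a b = 2 := dist_eq_two' hconn nab hnab hac hbc.symm
  rcases level_step hconn hμ hac with h | h
  · obtain ⟨m, -, -, -, huniq⟩ := median_structure hconn hμ (rfl : G.dist μ c = _) hlcd.symm dcd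
    have h1 : a = m := huniq a hac had (by omega)
    have h2 : b = m := huniq b hbc hbd (by omega)
    exact nab (h1.trans h2.symm)
  · obtain ⟨m, -, -, -, huniq⟩ := median_structure hconn hμ (rfl : G.dist μ a = _) hlab.symm dab
    have h1 : c = m := huniq c hac.symm hbc.symm (by omega)
    have h2 : d = m := huniq d had.symm hbd.symm (by omega)
    exact ncd (h1.trans h2.symm)

lemma hasInducedCopy_K23 {p q x z z' : V}
    (hpx : G.Adj p x) (hpz : G.Adj p z) (hpz' : G.Adj p z')
    (hqx : G.Adj q x) (hqz : G.Adj q z) (hqz' : G.Adj q z')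
    (hpq : ¬ G.Adj p q) (hxz : ¬ G.Adj x z) (hxz' : ¬ G.Adj x z') (hzz' : ¬ G.Adj z z')
    (npq : p ≠ q) (nxz : x ≠ z) (nxz' : x ≠ z') (nzz' : z ≠ z') :
    HasInducedCopy (completeBipartiteGraph (Fin 2) (Fin 3)) G := by
  have hpq' : ¬ G.Adj q p := fun h => hpq h.symm
  have hxz0 : ¬ G.Adj z x := fun h => hxz h.symm
  have hxz0' : ¬ G.Adj z' x := fun h => hxz' h.symm
  have hzz0' : ¬ G.Adj z' z := fun h => hzz' h.symm
  have e1 := hpx.symm; have e2 := hpz.symm; have e3 := hpz'.symm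
  have e4 := hqx.symm; have e5 := hqz.symm; have e6 := hqz'.symm
  have npx := hpx.ne; have npz := hpz.ne; have npz' := hpz'.ne
  have nqx := hqx.ne; have nqz := hqz.ne; have nqz' := hqz'.ne
  refine ⟨⟨Sum.elim ![p, q] ![x, z, z'], ?_⟩, ?_⟩
  · intro a b hab
    rcases a with a | a <;> rcases b with b | b <;> fin_cases a <;> fin_cases b <;>
      simp_all
  · intro a b
    show _ ↔ G.Adj (Sum.elim ![p, q] ![x, z, z'] a) (Sum.elim ![p, q] ![x, z, z'] b)
    rcases a with a | a <;> rcases b with b | b <;> fin_cases a <;> fin_cases b <;>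
      simp [*]

instance : DecidableRel CubeGraph3.Adj := fun a b =>
  decidable_of_iff _ (SimpleGraph.fromRel_adj _ a b).symm

end Helpers

private def q3map {V : Type*} (y x z z' m m' n : V) (v : Fin 3 → Bool) : V :=
  if v 0 then (if v 1 then m else if v 2 then m' else x)
  else (if v 1 then (if v 2 then n else z) else (if v 2 then z' else y))

lemma q3elems : ∀ a : Fin 3 → Bool, a ≠ (fun _ => true) →
    (a = ![false,false,false] ∨ a = ![true,false,false] ∨ a = ![false,true,false] ∨
    a = ![false,false,true] ∨ a = ![true,true,false] ∨ a = ![true,false,true] ∨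
    a = ![false,true,true]) := by decide

lemma q3minus_adj_iff (a b : {v : Fin 3 → Bool // v ≠ fun _ => true}) :
    Q3Minus.Adj a b ↔ CubeGraph3.Adj a.1 b.1 := Iff.rfl

lemma hasInducedCopy_Q3Minus {V : Type*} {G : SimpleGraph V} {y x z z' m m' n : V}
    (eyx : G.Adj y x) (eyz : G.Adj y z) (eyz' : G.Adj y z')
    (emx : G.Adj m x) (emz : G.Adj m z)
    (em'x : G.Adj m' x) (em'z' : G.Adj m' z')
    (enz : G.Adj n z) (enz' : G.Adj n z')
    (axz : ¬G.Adj x z) (axz' : ¬G.Adj x z') (azz' : ¬G.Adj z z')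
    (aym : ¬G.Adj y m) (aym' : ¬G.Adj y m') (ayn : ¬G.Adj y n)
    (amm' : ¬G.Adj m m') (amn : ¬G.Adj m n) (am'n : ¬G.Adj m' n)
    (amz' : ¬G.Adj m z') (am'z : ¬G.Adj m' z) (anx : ¬G.Adj n x)
    (nxz : x ≠ z) (nxz' : x ≠ z') (nzz' : z ≠ z')
    (nym : y ≠ m) (nym' : y ≠ m') (nyn : y ≠ n)
    (nmm' : m ≠ m') (nmn : m ≠ n) (nm'n : m' ≠ n)
    (nmz' : m ≠ z') (nm'z : m' ≠ z) (nnx : n ≠ x) :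
    HasInducedCopy Q3Minus G := by
  have eyx' := eyx.symm; have eyz0 := eyz.symm; have eyz0' := eyz'.symm
  have emx' := emx.symm; have emz0 := emz.symm
  have em'x' := em'x.symm; have em'z0' := em'z'.symm
  have enz0 := enz.symm; have enz0' := enz'.symm
  have nyx := eyx.ne; have nyz := eyz.ne; have nyz' := eyz'.ne
  have nmx := emx.ne; have nmz := emz.ne
  have nm'x := em'x.ne; have nm'z' := em'z'.ne
  have nnz := enz.ne; have nnz' := enz'.ne
  have axz0 : ¬G.Adj z x := fun h => axz h.symm
  have axz0' : ¬G.Adj z' x := fun h => axz' h.symm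
  have azz0' : ¬G.Adj z' z := fun h => azz' h.symm
  have aym0 : ¬G.Adj m y := fun h => aym h.symm
  have aym0' : ¬G.Adj m' y := fun h => aym' h.symm
  have ayn0 : ¬G.Adj n y := fun h => ayn h.symm
  have amm0' : ¬G.Adj m' m := fun h => amm' h.symm
  have amn0 : ¬G.Adj n m := fun h => amn h.symm
  have am'n0 : ¬G.Adj n m' := fun h => am'n h.symm
  have amz0' : ¬G.Adj z' m := fun h => amz' h.symm
  have am'z0 : ¬G.Adj z m' := fun h => am'z h.symm
  have anx0 : ¬G.Adj x n := fun h => anx h.symm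
  refine ⟨⟨fun v => q3map y x z z' m m' n v.1, ?_⟩, ?_⟩
  · intro a b hab
    dsimp only at hab
    rcases q3elems a.1 a.2 with h | h | h | h | h | h | h <;>
      rcases q3elems b.1 b.2 with k | k | k | k | k | k | k <;>
      rw [h, k] at hab <;>
      simp only [q3map, Matrix.cons_val_zero, Matrix.cons_val_one, Matrix.head_cons,
        Matrix.cons_val_two, Matrix.tail_cons, if_true, if_false, Bool.false_eq_true,
        ite_true, ite_false] at hab <;>
      first
        | exact Subtype.ext (h.trans k.symm)
        | exact absurd hab (by assumption)
        | exact absurd hab.symm (by assumption)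
  · intro a b
    rw [q3minus_adj_iff]
    show CubeGraph3.Adj a.1 b.1 ↔ G.Adj (q3map y x z z' m m' n a.1) (q3map y x z z' m m' n b.1)
    rcases q3elems a.1 a.2 with h | h | h | h | h | h | h <;>
      rcases q3elems b.1 b.2 with k | k | k | k | k | k | k <;>
      rw [h, k] <;>
      simp only [q3map, Matrix.cons_val_zero, Matrix.cons_val_one, Matrix.head_cons,
        Matrix.cons_val_two, Matrix.tail_cons, if_true, if_false, Bool.false_eq_true,
        ite_true, ite_false] <;>
      first
        | exact iff_of_true (by decide) (by assumption)
        | exact iff_of_false (by decide) (by assumption)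
        | exact iff_of_false (by decide) (G.loopless.irrefl _)

/-- Let `G` be a finite connected graph with medico vertex `μ` and with
no induced `Q_3^-`.  Then `G` contains an induced `K_{2,3}` iff there are vertices
`x, y, z, z'` with `z ≠ z'` and some `ℓ ≥ 1` such that both `(x,z,y,μ)` and
`(x,z',y,μ)` are distance-`ℓ`-static quartets. -/
theorem stmt10 {V : Type*} [Fintype V] (G : SimpleGraph V) (hconn : G.Connected)
    (μ : V) (hμ : Medico G μ)
    (hfree : ¬ HasInducedCopy Q3Minus G) :
    HasInducedCopy (completeBipartiteGraph (Fin 2) (Fin 3)) G ↔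
      ∃ (x y z z' : V) (ℓ : ℕ), z ≠ z' ∧
        DistLStatic G x z y μ ℓ ∧ DistLStatic G x z' y μ ℓ := by
  constructor
  · rintro ⟨f, hf⟩
    set a := f (Sum.inl 0) with hadef
    set b := f (Sum.inl 1) with hbdef
    set c := f (Sum.inr 0) with hcdef
    set d := f (Sum.inr 1) with hddef
    set e := f (Sum.inr 2) with hedef
    have hac : G.Adj a c := (hf _ _).mp (Or.inl ⟨rfl, rfl⟩)
    have had : G.Adj a d := (hf _ _).mp (Or.inl ⟨rfl, rfl⟩)
    have hae : G.Adj a e := (hf _ _).mp (Or.inl ⟨rfl, rfl⟩)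
    have hbc : G.Adj b c := (hf _ _).mp (Or.inl ⟨rfl, rfl⟩)
    have hbd : G.Adj b d := (hf _ _).mp (Or.inl ⟨rfl, rfl⟩)
    have hbe : G.Adj b e := (hf _ _).mp (Or.inl ⟨rfl, rfl⟩)
    have hnab : ¬ G.Adj a b := fun h => by simpa using (hf (Sum.inl 0) (Sum.inl 1)).mpr h
    have hncd : ¬ G.Adj c d := fun h => by simpa using (hf (Sum.inr 0) (Sum.inr 1)).mpr h
    have hnce : ¬ G.Adj c e := fun h => by simpa using (hf (Sum.inr 0) (Sum.inr 2)).mpr h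
    have hnde : ¬ G.Adj d e := fun h => by simpa using (hf (Sum.inr 1) (Sum.inr 2)).mpr h
    have nab : a ≠ b := fun h => absurd (f.injective h) (by decide)
    have ncd : c ≠ d := fun h => absurd (f.injective h) (by decide)
    have nce : c ≠ e := fun h => absurd (f.injective h) (by decide)
    have nde : d ≠ e := fun h => absurd (f.injective h) (by decide)
    have sc := level_step hconn hμ hac
    have sd := level_step hconn hμ had
    have se := level_step hconn hμ hae
    have sc' := level_step hconn hμ hbc
    have sd' := level_step hconn hμ hbd
    have se' := level_step hconn hμ hbe
    by_cases hlab : G.dist μ a = G.dist μ b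
    · exfalso
      have hpair : G.dist μ c = G.dist μ d ∨ G.dist μ c = G.dist μ e ∨
          G.dist μ d = G.dist μ e := by omega
      rcases hpair with hp | hp | hp
      · exact no_parallel hconn hμ hac had hbc hbd nab ncd hnab hncd hlab hp
      · exact no_parallel hconn hμ hac hae hbc hbe nab nce hnab hnce hlab hp
      · exact no_parallel hconn hμ had hae hbd hbe nab nde hnab hnde hlab hp
    · have key : G.dist μ d = G.dist μ c ∧ G.dist μ e = G.dist μ c ∧
          ((G.dist μ a + 1 = G.dist μ c ∧ G.dist μ b = G.dist μ c + 1) ∨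
           (G.dist μ b + 1 = G.dist μ c ∧ G.dist μ a = G.dist μ c + 1)) := by omega
      obtain ⟨hld, hle, hkey⟩ := key
      have dcd : G.dist c d = 2 := dist_eq_two' hconn ncd hncd hac.symm had
      have dce : G.dist c e = 2 := dist_eq_two' hconn nce hnce hac.symm hae
      rcases hkey with ⟨h1, h2⟩ | ⟨h1, h2⟩
      · exact ⟨c, b, d, e, G.dist μ c, nde,
          ⟨by omega, by rw [SimpleGraph.dist_comm],
            by rw [SimpleGraph.dist_comm]; exact hld,
            by rw [SimpleGraph.dist_comm]; exact h2, dcd, hbc.symm, hbd⟩,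
          ⟨by omega, by rw [SimpleGraph.dist_comm],
            by rw [SimpleGraph.dist_comm]; exact hle,
            by rw [SimpleGraph.dist_comm]; exact h2, dce, hbc.symm, hbe⟩⟩
      · exact ⟨c, a, d, e, G.dist μ c, nde,
          ⟨by omega, by rw [SimpleGraph.dist_comm],
            by rw [SimpleGraph.dist_comm]; exact hld,
            by rw [SimpleGraph.dist_comm]; exact h2, dcd, hac.symm, had⟩,
          ⟨by omega, by rw [SimpleGraph.dist_comm],
            by rw [SimpleGraph.dist_comm]; exact hle,
            by rw [SimpleGraph.dist_comm]; exact h2, dce, hac.symm, hae⟩⟩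
  · rintro ⟨x, y, z, z', ℓ, hzz', ⟨hl1, hxμ, hzμ, hyμ, hdxz, hxy, hyz⟩,
      ⟨-, -, hz'μ, -, hdxz', -, hyz'⟩⟩
    have hx : G.dist μ x = ℓ := by rw [SimpleGraph.dist_comm]; exact hxμ
    have hz : G.dist μ z = ℓ := by rw [SimpleGraph.dist_comm]; exact hzμ
    have hz'0 : G.dist μ z' = ℓ := by rw [SimpleGraph.dist_comm]; exact hz'μ
    have hy : G.dist μ y = ℓ + 1 := by rw [SimpleGraph.dist_comm]; exact hyμ
    have hnzz' : ¬ G.Adj z z' := fun h => level_adj_ne hconn hμ h (hz.trans hz'0.symm)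
    have dzz' : G.dist z z' = 2 := dist_eq_two' hconn hzz' hnzz' hyz.symm hyz'
    obtain ⟨m, hmx, hmz, hmL, hmU⟩ := median_structure hconn hμ hx hz hdxz
    obtain ⟨m2, hm2x, hm2z', hm2L, hm2U⟩ := median_structure hconn hμ hx hz'0 hdxz'
    obtain ⟨n, hnz, hnz', hnL, hnU⟩ := median_structure hconn hμ hz hz'0 dzz'
    by_cases hmm : m = m2
    · subst hmm
      exact hasInducedCopy_K23 hmx hmz hm2z' hxy.symm hyz hyz'
        (fun h => by have := level_adj_le hconn h μ; omega)
        (not_adj_of_dist_two hdxz) (not_adj_of_dist_two hdxz') hnzz'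
        (fun h => by rw [h] at hmL; omega)
        (ne_of_dist_two hdxz) (ne_of_dist_two hdxz') hzz'
    · exfalso
      apply hfree
      have hm2z : ¬ G.Adj m2 z := fun h => hmm ((hmU m2 hm2x h (by omega)).symm)
      have hmz' : ¬ G.Adj m z' := fun h => hmm (hm2U m hmx h (by omega))
      have hnnx : ¬ G.Adj n x := by
        intro h
        have hnm := hmU n h hnz (by omega)
        rw [hnm] at hnz'
        exact hmz' hnz'
      have aym : ¬ G.Adj y m := fun h => by have := level_adj_le hconn h.symm μ; omega
      have aym2 : ¬ G.Adj y m2 := fun h => by have := level_adj_le hconn h.symm μ; omega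
      have ayn : ¬ G.Adj y n := fun h => by have := level_adj_le hconn h.symm μ; omega
      have amm2 : ¬ G.Adj m m2 := fun h => level_adj_ne hconn hμ h (by omega)
      have amn : ¬ G.Adj m n := fun h => level_adj_ne hconn hμ h (by omega)
      have am2n : ¬ G.Adj m2 n := fun h => level_adj_ne hconn hμ h (by omega)
      have nym : y ≠ m := fun h => by rw [h] at hy; omega
      have nym2 : y ≠ m2 := fun h => by rw [h] at hy; omega
      have nyn : y ≠ n := fun h => by rw [h] at hy; omega
      have nmn : m ≠ n := by
        intro h
        rw [h] at hmz'
        exact hmz' hnz'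
      have nm2n : m2 ≠ n := by
        intro h
        rw [h] at hm2z
        exact hm2z hnz
      have nmz' : m ≠ z' := fun h => by rw [h] at hmL; omega
      have nm2z : m2 ≠ z := fun h => by rw [h] at hm2L; omega
      have nnx : n ≠ x := fun h => by rw [h] at hnL; omega
      exact hasInducedCopy_Q3Minus hxy.symm hyz hyz' hmx hmz hm2x hm2z' hnz hnz'
        (not_adj_of_dist_two hdxz) (not_adj_of_dist_two hdxz') hnzz'
        aym aym2 ayn amm2 amn am2n hmz' hm2z hnnx
        (ne_of_dist_two hdxz) (ne_of_dist_two hdxz') hzz'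
        nym nym2 nyn hmm nmn nm2n nmz' nm2z nnx
end

section
/- Let G be a finite simple connected modular graph with at least one median-consistent vertex. Then every convex subgraph H of G has a median-consistent vertex, i.e., there exists v ∈ V(H) with |I_H(v,x,y)| = 1 for all x,y ∈ V(H). -/
open SimpleGraph

/-- `OnShortestPath` is equivalent to the distance equation. -/
lemma onShortestPath_iff_dist {V : Type*} {G : SimpleGraph V} (hconn : G.Connected)
    (u v z : V) : OnShortestPath G u v z ↔ G.dist u z + G.dist z v = G.dist u v := by
  classical
  constructor
  · rintro ⟨p, hlen, hz⟩
    have h1 := SimpleGraph.dist_le (p.takeUntil z hz)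
    have h2 := SimpleGraph.dist_le (p.dropUntil z hz)
    have h3 : (p.takeUntil z hz).length + (p.dropUntil z hz).length = p.length := by
      rw [← SimpleGraph.Walk.length_append, SimpleGraph.Walk.take_spec]
    have h4 : G.dist u v ≤ G.dist u z + G.dist z v := hconn.dist_triangle
    omega
  · intro h
    obtain ⟨p1, h1⟩ := hconn.exists_walk_length_eq_dist u z
    obtain ⟨p2, h2⟩ := hconn.exists_walk_length_eq_dist z v
    refine ⟨p1.append p2, ?_, ?_⟩
    · rw [SimpleGraph.Walk.length_append, h1, h2, h]
    · rw [SimpleGraph.Walk.mem_support_append_iff]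
      exact Or.inl p1.end_mem_support

/-- A walk whose subgraph lies in `H` lifts to a walk of `H.coe`. -/
lemma lift_walk {V : Type*} {G : SimpleGraph V} {H : G.Subgraph} {u v : V} (p : G.Walk u v) :
    p.toSubgraph ≤ H → ∀ (hu : u ∈ H.verts) (hv : v ∈ H.verts),
      ∃ q : H.coe.Walk ⟨u, hu⟩ ⟨v, hv⟩, q.length = p.length ∧
        q.support.map Subtype.val = p.support := by
  induction p with
  | nil => exact fun _ hu hv => ⟨.nil, rfl, rfl⟩
  | @cons a b c h p ih =>
    intro hp hu hv
    rw [SimpleGraph.Walk.toSubgraph] at hp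
    have hab : H.Adj a b := hp.2 (by simp)
    have hb : b ∈ H.verts := H.edge_vert hab.symm
    obtain ⟨q, hlen, hsup⟩ := ih (le_trans le_sup_right hp) hb hv
    refine ⟨Walk.cons (by exact hab) q, by exact congrArg (· + 1) hlen, by exact congrArg (a :: ·) hsup⟩

/-- Let `G` be a finite connected modular graph with at least one
medico vertex.  Then every (nonempty) convex subgraph `H` of `G` has a medico vertex:
some `v ∈ V(H)` with `|I_H(v,x,y)| = 1` for all `x, y ∈ V(H)`. -/
theorem stmt19 {V : Type*} [Fintype V] (G : SimpleGraph V) (hconn : G.Connected)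
    (hmod : ∀ u v w : V, ∃ m : V, IsMedianPt G u v w m)
    (hμ : ∃ μ : V, Medico G μ)
    (H : G.Subgraph) (hne : H.verts.Nonempty)
    (hconv : ∀ u ∈ H.verts, ∀ v ∈ H.verts, ∀ p : G.Walk u v,
      p.length = G.dist u v → p.toSubgraph ≤ H) :
    ∃ v : H.verts, ∀ x y : H.verts, ∃! m : H.verts, IsMedianPt H.coe v x y m := by
  classical
  obtain ⟨μ, hμm⟩ := hμ
  -- any vertex on a shortest path between vertices of `H` is in `H`
  have hmemH : ∀ {a b z : V}, a ∈ H.verts → b ∈ H.verts → OnShortestPath G a b z →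
      z ∈ H.verts := by
    rintro a b z ha hb ⟨p, hlen, hz⟩
    exact (hconv a ha b hb p hlen).1 (p.mem_verts_toSubgraph.mpr hz)
  -- distances inside `H.coe` agree with distances in `G`
  have hdist : ∀ (a b : V) (ha : a ∈ H.verts) (hb : b ∈ H.verts),
      H.coe.dist ⟨a, ha⟩ ⟨b, hb⟩ = G.dist a b := by
    intro a b ha hb
    obtain ⟨p, hp⟩ := hconn.exists_walk_length_eq_dist a b
    obtain ⟨q, hqlen, _⟩ := lift_walk p (hconv a ha b hb p hp) ha hb
    have hle : H.coe.dist ⟨a, ha⟩ ⟨b, hb⟩ ≤ G.dist a b := by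
      rw [← hp, ← hqlen]; exact SimpleGraph.dist_le q
    have hr : H.coe.Reachable ⟨a, ha⟩ ⟨b, hb⟩ := ⟨q⟩
    obtain ⟨r, hr'⟩ := hr.exists_walk_length_eq_dist
    have hge : G.dist a b ≤ H.coe.dist ⟨a, ha⟩ ⟨b, hb⟩ := by
      rw [← hr']
      have := SimpleGraph.dist_le (r.map (SimpleGraph.Subgraph.hom H))
      rwa [SimpleGraph.Walk.length_map] at this
    omega
  -- `OnShortestPath` in `H.coe` iff in `G`
  have hosp : ∀ (a b z : V) (ha : a ∈ H.verts) (hb : b ∈ H.verts) (hz : z ∈ H.verts),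
      OnShortestPath H.coe ⟨a, ha⟩ ⟨b, hb⟩ ⟨z, hz⟩ ↔ OnShortestPath G a b z := by
    intro a b z ha hb hz
    constructor
    · rintro ⟨r, hrlen, hrz⟩
      refine ⟨r.map (SimpleGraph.Subgraph.hom H), ?_, ?_⟩
      · have h := SimpleGraph.Walk.length_map (SimpleGraph.Subgraph.hom H) r
        rw [hrlen, hdist] at h; exact h
      · have h := List.mem_map_of_mem (f := SimpleGraph.Subgraph.hom H) hrz
        rw [← SimpleGraph.Walk.support_map] at h
        exact h
    · rintro ⟨p, hplen, hpz⟩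
      obtain ⟨q, hqlen, hqsup⟩ := lift_walk p (hconv a ha b hb p hplen) ha hb
      refine ⟨q, by rw [hqlen, hplen, hdist], ?_⟩
      have : z ∈ q.support.map Subtype.val := by rw [hqsup]; exact hpz
      obtain ⟨t, ht, htz⟩ := List.mem_map.mp this
      have : t = ⟨z, hz⟩ := Subtype.ext htz
      rwa [this] at ht
  have key : ∀ a b c : V, OnShortestPath G a b c ↔ G.dist a c + G.dist c b = G.dist a b :=
    fun a b c => onShortestPath_iff_dist hconn a b c
  -- choose v ∈ H minimizing distance to μ
  obtain ⟨v, hvH, hvmin⟩ :=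
    Set.exists_min_image H.verts (fun a => G.dist μ a) (Set.toFinite _) hne
  -- v is a gate: G.dist μ a = G.dist μ v + G.dist v a for all a ∈ H
  have hgate : ∀ a ∈ H.verts, G.dist μ v + G.dist v a = G.dist μ a := by
    intro a ha
    obtain ⟨m, hm1, hm2, hm3⟩ := hmod μ v a
    have hmH : m ∈ H.verts := hmemH hvH ha hm3
    have e1 : G.dist μ m + G.dist m v = G.dist μ v := (key μ v m).mp hm1
    have e2 : G.dist μ m + G.dist m a = G.dist μ a := (key μ a m).mp hm2
    have hmin : G.dist μ v ≤ G.dist μ m := hvmin m hmH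
    have hmv : G.dist m v = 0 := by omega
    have : m = v := (hconn.dist_eq_zero_iff).mp hmv
    subst this
    omega
  refine ⟨⟨v, hvH⟩, fun x y => ?_⟩
  obtain ⟨m₀, ⟨hm01, hm02, hm03⟩, huniq⟩ := hμm x.val y.val
  have hm0H : m₀ ∈ H.verts := hmemH x.2 y.2 hm03
  have e1 : G.dist μ m₀ + G.dist m₀ x.val = G.dist μ x.val := (key _ _ _).mp hm01
  have e2 : G.dist μ m₀ + G.dist m₀ y.val = G.dist μ y.val := (key _ _ _).mp hm02
  have gx := hgate x.val x.2
  have gy := hgate y.val y.2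
  have gm := hgate m₀ hm0H
  refine ⟨⟨m₀, hm0H⟩, ⟨?_, ?_, ?_⟩, ?_⟩
  · exact (hosp v x.val m₀ hvH x.2 hm0H).mpr ((key _ _ _).mpr (by omega))
  · exact (hosp v y.val m₀ hvH y.2 hm0H).mpr ((key _ _ _).mpr (by omega))
  · exact (hosp x.val y.val m₀ x.2 y.2 hm0H).mpr hm03
  · rintro ⟨m, hmH⟩ ⟨h1, h2, h3⟩
    have g1 : G.dist v m + G.dist m x.val = G.dist v x.val :=
      (key _ _ _).mp ((hosp v x.val m hvH x.2 hmH).mp h1)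
    have g2 : G.dist v m + G.dist m y.val = G.dist v y.val :=
      (key _ _ _).mp ((hosp v y.val m hvH y.2 hmH).mp h2)
    have g3 : OnShortestPath G x.val y.val m := (hosp x.val y.val m x.2 y.2 hmH).mp h3
    have gm' := hgate m hmH
    have : m = m₀ := huniq m ⟨(key _ _ _).mpr (by omega), (key _ _ _).mpr (by omega), g3⟩
    exact Subtype.ext this
end
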